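/- Over ZMod 5, the matrices [A | (1,1,1)ᵀ] = !![1,0,0,1,0,1,1; 0,1,0,1,1,0,1; 0,0,1,0,1,1,1] and [B | (1,1,1)ᵀ] = !![1,0,0,1,0,1,1; 0,1,0,1,1,0,1; 0,0,1,0,1,2,1] do NOT have isomorphic column matroids: there is no bijection σ : Fin 7 ≃ Fin 7 such that for every S ⊆ Fin 7, S is independent in the first matrix iff σ '' S is independent in the second. (The first represents the non-Fano matroid F₇⁻ and the second represents X₇.) -/

import Mathlib

/-- Two matrices are geometrically equivalent if one is obtained from the other by
elementary row operations (an invertible matrix `Q`), column scaling (an invertible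
diagonal matrix), and column permutations (a permutation matrix). -/
def GeomEquiv {F : Type*} [Field F] {r n : ℕ}
    (A A' : Matrix (Fin r) (Fin n) F) : Prop :=
  ∃ (Q : Matrix (Fin r) (Fin r) F) (d : Fin n → F) (σ : Equiv.Perm (Fin n)),
    IsUnit Q ∧ (∀ j, d j ≠ 0) ∧
    A' = Q * A * Matrix.diagonal d * σ.permMatrix F

/-- Two matrices are projectively equivalent if one is obtained from the other by
elementary row operations and column scaling. -/
def ProjEquiv {F : Type*} [Field F] {r n : ℕ}
    (A A' : Matrix (Fin r) (Fin n) F) : Prop :=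
  ∃ (Q : Matrix (Fin r) (Fin r) F) (d : Fin n → F),
    IsUnit Q ∧ (∀ j, d j ≠ 0) ∧ A' = Q * A * Matrix.diagonal d

/-- A set `S` of column indices is independent in `A` if the corresponding columns
of `A` are linearly independent. -/
def Indep {F : Type*} [Field F] {r n : ℕ}
    (A : Matrix (Fin r) (Fin n) F) (S : Set (Fin n)) : Prop :=
  LinearIndependent F (fun s : S => A.transpose s.val)

/-- The matrix `[A | x]` obtained from `A` by appending the column `x`. -/
def appendCol {F : Type*} [Field F] {r n : ℕ}
    (A : Matrix (Fin r) (Fin n) F) (x : Fin r → F) :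
    Matrix (Fin r) (Fin (n + 1)) F :=
  Matrix.of fun i => Fin.snoc (A i) (x i)

instance : Fact (Nat.Prime 3) := ⟨by norm_num⟩
instance : Fact (Nat.Prime 5) := ⟨by norm_num⟩

def tripleEquiv {a b c : Fin 7} (hab : a ≠ b) (hac : a ≠ c) (hbc : b ≠ c) :
    Fin 3 ≃ ({a, b, c} : Set (Fin 7)) where
  toFun := ![⟨a, by simp⟩, ⟨b, by simp⟩, ⟨c, by simp⟩]
  invFun := fun s => if s.val = a then 0 else if s.val = b then 1 else 2
  left_inv := by
    intro i
    fin_cases i <;> simp [hab.symm, hac.symm, hbc.symm]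
  right_inv := by
    rintro ⟨x, hx⟩
    simp only [Set.mem_insert_iff, Set.mem_singleton_iff] at hx
    rcases hx with rfl | rfl | rfl <;>
      simp [hab, hac, hbc, hab.symm, hac.symm, hbc.symm]

lemma indep_iff_det {a b c : Fin 7} (hab : a ≠ b) (hac : a ≠ c) (hbc : b ≠ c)
    (A : Matrix (Fin 3) (Fin 7) (ZMod 5)) :
    Indep A ({a, b, c} : Set (Fin 7)) ↔
      (Matrix.of ![A.transpose a, A.transpose b, A.transpose c]).det ≠ 0 := by
  rw [Indep, ← linearIndependent_equiv (tripleEquiv hab hac hbc) (f := fun s : ({a, b, c} : Set (Fin 7)) => A.transpose s.val)]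
  have h : (fun s : ({a, b, c} : Set (Fin 7)) => A.transpose s.val) ∘ (tripleEquiv hab hac hbc)
      = fun i => (Matrix.of ![A.transpose a, A.transpose b, A.transpose c]) i := by
    funext i; fin_cases i <;> simp [tripleEquiv] <;> rfl
  rw [h]
  change LinearIndependent (ZMod 5) (Matrix.row (Matrix.of ![A.transpose a, A.transpose b, A.transpose c])) ↔ _
  rw [Matrix.linearIndependent_rows_iff_isUnit, Matrix.isUnit_iff_isUnit_det,
    isUnit_iff_ne_zero]

def D1 : Finset (Finset (Fin 7)) := {{0,1,3},{0,2,5},{0,4,6},{1,2,4},{1,5,6},{2,3,6}}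
def D2 : Finset (Finset (Fin 7)) := {{0,1,3},{0,2,5},{0,4,6},{1,2,4},{2,3,6}}

/-- `[A | (1,1,1)ᵀ]` (representing `F₇⁻`) and `[B | (1,1,1)ᵀ]` (representing `X₇`)
do not have isomorphic column matroids. -/
theorem nonFano_X7_not_isomorphic :
    let M₁ : Matrix (Fin 3) (Fin 7) (ZMod 5) :=
      !![1,0,0,1,0,1,1; 0,1,0,1,1,0,1; 0,0,1,0,1,1,1]
    let M₂ : Matrix (Fin 3) (Fin 7) (ZMod 5) :=
      !![1,0,0,1,0,1,1; 0,1,0,1,1,0,1; 0,0,1,0,1,2,1]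
    ¬ ∃ σ : Fin 7 ≃ Fin 7, ∀ S : Set (Fin 7), Indep M₁ S ↔ Indep M₂ (σ '' S) := by
  intro M₁ M₂
  rintro ⟨σ, hσ⟩
  -- every dependent 3-element subset of M₂ is in D2
  have key : ∀ x y z : Fin 7, x ≠ y → x ≠ z → y ≠ z →
      (Matrix.of ![M₂.transpose x, M₂.transpose y, M₂.transpose z]).det = 0 →
      ({x, y, z} : Finset (Fin 7)) ∈ D2 := by decide
  -- each triple in D1 is dependent in M₁
  have hdep : ∀ a b c : Fin 7, ({a, b, c} : Finset (Fin 7)) ∈ D1 →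
      (Matrix.of ![M₁.transpose a, M₁.transpose b, M₁.transpose c]).det = 0 := by decide
  have main : ∀ s ∈ D1, s.image σ ∈ D2 := by
    intro s hs
    have hcases : ∃ a b c : Fin 7, a ≠ b ∧ a ≠ c ∧ b ≠ c ∧ s = {a, b, c} := by
      fin_cases hs
      · exact ⟨0, 1, 3, by decide, by decide, by decide, rfl⟩
      · exact ⟨0, 2, 5, by decide, by decide, by decide, rfl⟩
      · exact ⟨0, 4, 6, by decide, by decide, by decide, rfl⟩
      · exact ⟨1, 2, 4, by decide, by decide, by decide, rfl⟩
      · exact ⟨1, 5, 6, by decide, by decide, by decide, rfl⟩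
      · exact ⟨2, 3, 6, by decide, by decide, by decide, rfl⟩
    obtain ⟨a, b, c, hab, hac, hbc, rfl⟩ := hcases
    -- {a,b,c} is dependent in M₁
    have h1 : ¬ Indep M₁ ({a, b, c} : Set (Fin 7)) := by
      rw [indep_iff_det hab hac hbc]
      simp only [ne_eq, not_not]
      exact hdep a b c hs
    -- so σ '' {a,b,c} is dependent in M₂
    have h2 : ¬ Indep M₂ (σ '' ({a, b, c} : Set (Fin 7))) := fun h => h1 ((hσ _).mpr h)
    have himg : σ '' ({a, b, c} : Set (Fin 7)) = ({σ a, σ b, σ c} : Set (Fin 7)) := by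
      simp [Set.image_insert_eq]
    rw [himg, indep_iff_det (fun h => hab (σ.injective h)) (fun h => hac (σ.injective h))
      (fun h => hbc (σ.injective h))] at h2
    simp only [ne_eq, not_not] at h2
    have := key _ _ _ (fun h => hab (σ.injective h)) (fun h => hac (σ.injective h))
      (fun h => hbc (σ.injective h)) h2
    simpa [Finset.image_insert] using this
  -- cardinality contradiction
  have hinj : Set.InjOn (fun s : Finset (Fin 7) => s.image σ) (↑D1 : Set (Finset (Fin 7))) := by
    intro s _ t _ h
    exact Finset.image_injective σ.injective h
  have hle : D1.card ≤ D2.card := Finset.card_le_card_of_injOn _ main hinj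
  have h1 : D1.card = 6 := by decide
  have h2 : D2.card = 5 := by decide
  omega
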